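/- Let P(x) = x^3 - b x^2 + c x + d with b > 2, d > 0, P(-1) < 0 and P(1) > 0. Then P has exactly one root in the interval (-1, 0) and the other two roots lie outside the closed unit disk. -/

import Mathlib

theorem stmt_15 (b c d : ℝ) (hb : 2 < b) (hd : 0 < d)
    (hm1 : (-1 : ℝ) ^ 3 - b * (-1) ^ 2 + c * (-1) + d < 0)
    (h1 : 0 < (1 : ℝ) ^ 3 - b * 1 ^ 2 + c * 1 + d) :
    (∃! x : ℝ, x ∈ Set.Ioo (-1 : ℝ) 0 ∧ x ^ 3 - b * x ^ 2 + c * x + d = 0) ∧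
    (∀ z : ℂ, z ^ 3 - (b : ℂ) * z ^ 2 + (c : ℂ) * z + (d : ℂ) = 0 →
      ¬(z.im = 0 ∧ z.re ∈ Set.Ioo (-1 : ℝ) 0) → 1 < ‖z‖) := by
  -- Find a real root r ∈ (-1, 0) by the intermediate value theorem
  obtain ⟨r, hrmem, hr⟩ : ∃ r ∈ Set.Ioo (-1:ℝ) 0, r^3 - b*r^2 + c*r + d = 0 := by
    have hcont : ContinuousOn (fun x : ℝ => x^3 - b*x^2 + c*x + d) (Set.Icc (-1) 0) := by
      fun_prop
    have hivt := intermediate_value_Ioo (by norm_num : (-1:ℝ) ≤ 0) hcont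
    have h0 : (0:ℝ) ∈ Set.Ioo ((fun x : ℝ => x^3 - b*x^2 + c*x + d) (-1))
        ((fun x : ℝ => x^3 - b*x^2 + c*x + d) 0) := by
      constructor
      · simp only
        nlinarith
      · simp only
        nlinarith
    obtain ⟨r, hrm, hre⟩ := hivt h0
    exact ⟨r, hrm, hre⟩
  obtain ⟨hrm1, hr0⟩ := hrmem
  -- Factorization: P(x) = (x - r) * (x^2 + (r-b)x + (r^2 - b r + c))
  have key : ∀ x : ℝ, x^3 - b*x^2 + c*x + d
      = (x - r) * (x^2 + (r-b)*x + (r^2 - b*r + c)) := by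
    intro x
    linear_combination hr
  -- Q(1) > 0
  have Q1 : 0 < 1 + (r-b) + (r^2 - b*r + c) := by
    have hk := key 1
    nlinarith [h1, hk, hr0]
  -- q > 1
  have hq : 1 < r^2 - b*r + c := by nlinarith [Q1, hb, hr0]
  -- Q > 0 on [-1,1]
  have Qpos : ∀ x : ℝ, -1 ≤ x → x ≤ 1 → 0 < x^2 + (r-b)*x + (r^2 - b*r + c) := by
    intro x hx1 hx2
    have hmul : 0 ≤ (1 - x) * (-(x + 1 + (r-b))) := by
      apply mul_nonneg
      · linarith
      · linarith
    nlinarith [Q1, hmul]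
  constructor
  · -- uniqueness part
    refine ⟨r, ⟨⟨hrm1, hr0⟩, hr⟩, ?_⟩
    rintro x ⟨⟨hx1, hx0⟩, hxeq⟩
    have hk := key x
    rw [hxeq] at hk
    have hQx : 0 < x^2 + (r-b)*x + (r^2 - b*r + c) :=
      Qpos x (le_of_lt hx1) (by linarith)
    have hxr : x - r = 0 := by
      rcases mul_eq_zero.mp hk.symm with h | h
      · exact h
      · exact absurd h (ne_of_gt hQx)
    linarith [sub_eq_zero.mp hxr]
  · -- complex roots outside the unit disk
    intro z hz hnot
    have hrC : (r:ℂ)^3 - (b:ℂ)*(r:ℂ)^2 + (c:ℂ)*(r:ℂ) + (d:ℂ) = 0 := by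
      exact_mod_cast hr
    have keyC : z^3 - (b:ℂ)*z^2 + (c:ℂ)*z + (d:ℂ)
        = (z - r) * (z^2 + ((r:ℂ)-b)*z + ((r:ℂ)^2 - b*r + c)) := by
      linear_combination hrC
    rw [keyC] at hz
    rcases mul_eq_zero.mp hz with hzr | hQz
    · -- z = r : excluded by hypothesis
      have hzr' : z = (r:ℂ) := sub_eq_zero.mp hzr
      exfalso
      apply hnot
      constructor
      · rw [hzr']; exact Complex.ofReal_im r
      · rw [hzr', Complex.ofReal_re]; exact ⟨hrm1, hr0⟩
    · by_cases him : z.im = 0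
      · -- real root of the quadratic
        have hzx : z = (z.re : ℂ) := by
          apply Complex.ext
          · simp
          · simp [him]
        set x := z.re with hxdef
        rw [hzx] at hQz
        have hQx : x^2 + (r-b)*x + (r^2 - b*r + c) = 0 := by
          exact_mod_cast hQz
        rw [hzx, Complex.norm_real, Real.norm_eq_abs]
        by_contra h
        push_neg at h
        have hx1 : -1 ≤ x := by
          have := abs_le.mp h
          exact this.1
        have hx2 : x ≤ 1 := (abs_le.mp h).2
        have := Qpos x hx1 hx2
        linarith
      · -- nonreal root: conjugate pair, |z|^2 = q > 1
        have hconj : (starRingEnd ℂ z)^2 + ((r:ℂ)-b)*(starRingEnd ℂ z)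
            + ((r:ℂ)^2 - b*r + c) = 0 := by
          have := congrArg (starRingEnd ℂ) hQz
          simpa [map_add, map_mul, map_pow, map_sub, Complex.conj_ofReal] using this
        have hne : z - starRingEnd ℂ z ≠ 0 := by
          intro h
          exact him (Complex.conj_eq_iff_im.mp (sub_eq_zero.mp h).symm)
        have hfac : (z - starRingEnd ℂ z) * (z + starRingEnd ℂ z + ((r:ℂ)-b)) = 0 := by
          linear_combination hQz - hconj
        have hsum : z + starRingEnd ℂ z + ((r:ℂ)-b) = 0 :=
          (mul_eq_zero.mp hfac).resolve_left hne
        have hprod : z * starRingEnd ℂ z = (r:ℂ)^2 - b*r + c := by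
          linear_combination z * hsum - hQz
        have hnormC : (Complex.normSq z : ℂ) = (r:ℂ)^2 - (b:ℂ)*r + c := by
          rw [← Complex.mul_conj]; exact hprod
        have hnorm : Complex.normSq z = r^2 - b*r + c := by
          exact_mod_cast hnormC
        have habs : (‖z‖)^2 = r^2 - b*r + c := by
          rw [Complex.sq_norm, hnorm]
        nlinarith [norm_nonneg z, hq, habs]
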